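/- There is no rational invertible 2×2 matrix M such that M·A(x,y)·Mᵀ is diagonal for all (x,y) ∈ ℝ², where A(x,y) = [[2x, y],[y, x]]. -/
import Mathlib


open Matrix

lemma rat_sq_ne_two (q : ℚ) : q ^ 2 ≠ 2 := by
  intro h
  have h2 : ((q : ℝ)) ^ 2 = 2 := by exact_mod_cast congrArg (fun r : ℚ => (r : ℝ)) h
  have hs : Real.sqrt 2 = |(q : ℝ)| := by
    rw [← h2, Real.sqrt_sq_eq_abs]
  have hirr : Irrational (Real.sqrt 2) := irrational_sqrt_two
  rw [hs] at hirr
  exact hirr ⟨|q|, by push_cast; rfl⟩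

theorem no_rational_congruence_diagonalization :
    ¬ ∃ M : Matrix (Fin 2) (Fin 2) ℚ, IsUnit M ∧
      ∀ x y : ℚ, (M * !![2 * x, y; y, x] * Mᵀ).IsDiag := by
  rintro ⟨M, hU, hd⟩
  have hdet : M.det ≠ 0 := ((Matrix.isUnit_iff_isUnit_det M).mp hU).ne_zero
  rw [Matrix.det_fin_two] at hdet
  set a := M 0 0 with ha
  set b := M 0 1 with hb
  set c := M 1 0 with hc
  set d := M 1 1 with hdd
  have h01 : (0 : Fin 2) ≠ 1 := by decide
  have e1 := hd 1 0 h01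
  have e2 := hd 0 1 h01
  simp only [Matrix.mul_apply, Matrix.transpose_apply, Fin.sum_univ_two,
    Matrix.cons_val', Matrix.cons_val_zero, Matrix.cons_val_one, Matrix.head_cons,
    Matrix.empty_val', Matrix.cons_val_fin_one, Matrix.head_fin_const] at e1 e2
  norm_num [Matrix.cons_val_zero, Matrix.cons_val_one, Matrix.head_cons] at e1 e2
  rw [← ha, ← hb, ← hc, ← hdd] at e1 e2
  -- e1 : 2*ac + bd = 0 ; e2 : ad + bc = 0 (after ring normalization)
  have key1 : 2 * a * c + b * d = 0 := by linarith [e1]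
  have key2 : a * d + b * c = 0 := by linarith [e2]
  have hbc : b * c ≠ 0 := by
    intro h0
    apply hdet
    have : a * d = - (b * c) := by linarith
    rw [this, h0]; ring
  have hb0 : b ≠ 0 := fun h => hbc (by rw [h]; ring)
  have hc0 : c ≠ 0 := fun h => hbc (by rw [h]; ring)
  -- from key1 : d = -2ac/b ; plug in key2 : -2a²c/b + bc = 0 → 2a²c = b²c → 2a² = b²
  have h2ab : 2 * a ^ 2 = b ^ 2 := by
    have hbd : b * d = - (2 * a * c) := by linarith
    have : b * (a * d + b * c) = 0 := by rw [key2]; ring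
    have hh : a * (b * d) + b ^ 2 * c = 0 := by ring_nf; ring_nf at this; linarith
    rw [hbd] at hh
    have : c * (b ^ 2 - 2 * a ^ 2) = 0 := by linarith [hh]
    rcases mul_eq_zero.mp this with h | h
    · exact absurd h hc0
    · linarith
  have : (b / a) ^ 2 = 2 ∨ a = 0 := by
    by_cases ha0 : a = 0
    · right; exact ha0
    · left; field_simp; linarith
  rcases this with h | h
  · exact rat_sq_ne_two _ h
  · rw [h] at h2ab
    have : b = 0 := by
      have : b ^ 2 = 0 := by linarith
      exact pow_eq_zero_iff (by norm_num) |>.mp this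
    exact hb0 this
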